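/- Let $R$ be a Dedekind domain of characteristic $0$ with fraction field $F$, let $\mathfrak{A}$ be a Gorenstein $R$-order in a separable commutative $F$-algebra $A$, let $e$ be an idempotent of $A$, let $X$ be an $\mathfrak{A}$-lattice, and let $\eta \in X^e := \{x\in X : ex = x\}$ be an element such that $e' \cdot \eta \ne 0$ in $F\otimes_R X$ for every primitive idempotent $e'$ of $Ae$. Then: (1) the map $e \mapsto \eta$ induces an isomorphism of $\mathfrak{A}$-modules $\mathfrak{A}e \cong \mathfrak{A}\cdot\eta$; and (2) evaluation at $\eta$ induces an isomorphism $\operatorname{Hom}_{\mathfrak{A}}(\mathfrak{A}\cdot\eta, \mathfrak{A}) \cong \mathfrak{A}^e := \{x\in\mathfrak{A} : ex = x \text{ in } A\}$. -/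

import Mathlib

open CategoryTheory Opposite

universe u

theorem key_idem (F A : Type u) [Field F] [CommRing A] [Algebra F A] [FiniteDimensional F A]
    [Algebra.IsSeparable F A] (e z : A) (he : IsIdempotentElem e) (hz : z * e = z)
    (hz0 : z ≠ 0) :
    ∃ e' y : A, e' ≠ 0 ∧ IsIdempotentElem e' ∧
      (∀ f, IsIdempotentElem f → f * e' = f → f = 0 ∨ f = e') ∧
      e' * e = e' ∧ y * z = e' := by
  classical
  haveI : IsArtinianRing A := isArtinian_of_tower F inferInstance
  haveI : IsReduced A := by
    constructor
    intro x ⟨n, hn⟩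
    rcases Nat.eq_zero_or_pos n with rfl | hnpos
    · simpa using congrArg (x * ·) hn
    have hsep := Algebra.IsSeparable.isSeparable F x
    have hdvd : minpoly F x ∣ Polynomial.X ^ n := minpoly.dvd F x (by simp [hn])
    obtain ⟨c, hc⟩ := (hsep.squarefree.dvd_pow_iff_dvd hnpos.ne').mp hdvd
    have h1 := minpoly.aeval F x
    have h2 := congrArg (Polynomial.aeval x) hc
    simpa [h1] using h2
  letI : ∀ J : MaximalSpectrum A, Field (A ⧸ J.asIdeal) :=
    fun J => @Ideal.Quotient.field _ _ J.asIdeal J.isMaximal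
  set π := IsArtinianRing.equivPi A with hπ
  have hzπ : π z ≠ 0 := fun h => hz0 (by simpa using congrArg π.symm h)
  obtain ⟨I, hI⟩ : ∃ I, π z I ≠ 0 := by
    by_contra h
    push_neg at h
    exact hzπ (funext h)
  have hidemJ : ∀ (t : A), IsIdempotentElem t → ∀ J, π t J = 0 ∨ π t J = 1 := by
    intro t ht J
    apply IsIdempotentElem.iff_eq_zero_or_one.mp
    show π t J * π t J = π t J
    have := congrArg (fun s => π s J) ht
    simpa [map_mul] using this
  have heI : π e I = 1 := by
    rcases hidemJ e he I with h0 | h1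
    · exfalso
      apply hI
      have := congrArg (fun t => π t I) hz
      simp only [map_mul, Pi.mul_apply] at this
      rw [← this, h0, mul_zero]
    · exact h1
  refine ⟨π.symm (Pi.single I 1), π.symm (Pi.single I (π z I)⁻¹), ?_, ?_, ?_, ?_, ?_⟩
  · intro h
    have : (Pi.single I 1 : ∀ J : MaximalSpectrum A, A ⧸ J.asIdeal) = 0 := by
      simpa using congrArg π h
    have := congrFun this I
    simp at this
  · show _ * _ = _
    rw [← map_mul]
    congr 1
    funext J
    by_cases hJ : J = I
    · subst hJ; simp
    · simp [Pi.single_eq_of_ne hJ]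
  · intro f hf hfe
    have hzero : ∀ J, J ≠ I → π f J = 0 := by
      intro J hJ
      have := congrArg (fun t => π t J) hfe
      simp only [map_mul, Pi.mul_apply, AlgEquiv.apply_symm_apply] at this
      rw [Pi.single_eq_of_ne hJ, mul_zero] at this
      exact this.symm
    rcases hidemJ f hf I with h0 | h1
    · left
      have : π f = 0 := by
        funext J
        by_cases hJ : J = I
        · subst hJ; simpa using h0
        · simpa using hzero J hJ
      simpa using congrArg π.symm this
    · right
      have : π f = Pi.single I 1 := by
        funext J
        by_cases hJ : J = I
        · subst hJ; simpa using h1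
        · rw [Pi.single_eq_of_ne hJ]; exact hzero J hJ
      have := congrArg π.symm this
      simpa using this
  · apply π.injective
    rw [map_mul, AlgEquiv.apply_symm_apply]
    funext J
    by_cases hJ : J = I
    · subst hJ
      simp only [Pi.mul_apply, Pi.single_eq_same, one_mul]
      exact heI
    · simp [Pi.single_eq_of_ne hJ]
  · apply π.injective
    rw [map_mul, AlgEquiv.apply_symm_apply, AlgEquiv.apply_symm_apply]
    funext J
    by_cases hJ : J = I
    · subst hJ
      simp only [Pi.mul_apply, Pi.single_eq_same]
      exact inv_mul_cancel₀ hI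
    · simp [Pi.single_eq_of_ne hJ]

/-- Let `R` be a Dedekind domain of characteristic `0` with fraction field
`F`, let `𝔄` be a Gorenstein `R`-order in a finite-dimensional separable commutative
`F`-algebra `A`, let `e` be an idempotent of `A`, and let `X` be an `𝔄`-lattice (realised as
a finitely generated `𝔄`-submodule of an `A`-module `V` which is an `F`-vector space). Let
`η ∈ X` satisfy `e • η = η` and have non-zero component at each simple component of `Ae`,
i.e. `e' • η ≠ 0` for every primitive idempotent `e'` of `A` with `e' e = e'`. Then:
(1) the assignment `e ↦ η` induces an isomorphism `𝔄e ≅ 𝔄·η`, i.e. for `a ∈ 𝔄` one has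
`a • η = 0` exactly when `a e = 0` in `A`; and (2) evaluation at `η` induces an isomorphism
`Hom_𝔄(𝔄·η, 𝔄) ≅ 𝔄ᵉ = {a ∈ 𝔄 : e a = a}`: the evaluation map is injective with image
exactly `𝔄ᵉ`. -/
theorem generator_span_eval_iso
    (R : Type u) [CommRing R] [IsDedekindDomain R] [CharZero R]
    (F : Type u) [Field F] [Algebra R F] [IsFractionRing R F]
    (A : Type u) [CommRing A] [Algebra F A] [FiniteDimensional F A] [Algebra.IsSeparable F A]
    [Algebra R A] [IsScalarTower R F A]
    (𝔄 : Type u) [CommRing 𝔄] [Algebra R 𝔄] [Module.Finite R 𝔄]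
    [Algebra 𝔄 A] [IsScalarTower R 𝔄 A]
    (hinj : Function.Injective (algebraMap 𝔄 A))
    (hspan : Submodule.span F (Set.range (algebraMap 𝔄 A)) = ⊤)
    (hGor : ∀ (N : Type u) [AddCommGroup N] [Module 𝔄 N] [Module R N] [IsScalarTower R 𝔄 N],
      Module.Finite 𝔄 N → (∀ (r : R) (n : N), r • n = 0 → r = 0 ∨ n = 0) →
      Subsingleton (((Ext 𝔄 (ModuleCat.{u} 𝔄) 1).obj (op (ModuleCat.of 𝔄 N))).obj
        (ModuleCat.of 𝔄 𝔄)))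
    (e : A) (he : IsIdempotentElem e)
    (V : Type u) [AddCommGroup V] [Module A V] [Module F V] [IsScalarTower F A V]
    [Module 𝔄 V] [IsScalarTower 𝔄 A V] [Module R V] [IsScalarTower R F V]
    [IsScalarTower R 𝔄 V]
    (X : Submodule 𝔄 V) (hXfg : X.FG)
    (η : V) (hηX : η ∈ X) (hηfix : e • η = η)
    (hηnz : ∀ e' : A, e' ≠ 0 → IsIdempotentElem e' →
      (∀ f : A, IsIdempotentElem f → f * e' = f → f = 0 ∨ f = e') →
      e' * e = e' → e' • η ≠ 0) :
    (∀ a : 𝔄, a • η = 0 ↔ algebraMap 𝔄 A a * e = 0) ∧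
    Function.Injective
      (fun θ : (Submodule.span 𝔄 ({η} : Set V)) →ₗ[𝔄] 𝔄 =>
        θ ⟨η, Submodule.mem_span_singleton_self η⟩) ∧
    Set.range
      (fun θ : (Submodule.span 𝔄 ({η} : Set V)) →ₗ[𝔄] 𝔄 =>
        θ ⟨η, Submodule.mem_span_singleton_self η⟩) =
      {a : 𝔄 | e * algebraMap 𝔄 A a = algebraMap 𝔄 A a} := by
  classical
  -- basic facts
  have hRsmul : ∀ (r : R) (c : 𝔄), algebraMap 𝔄 A (r • c) = r • algebraMap 𝔄 A c := by
    intro r c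
    rw [Algebra.smul_def, map_mul, ← IsScalarTower.algebraMap_apply, Algebra.smul_def]
  have hr_cancel : ∀ (r : R), r ≠ 0 → ∀ u : A, r • u = 0 → u = 0 := by
    intro r hr u h
    have hF : algebraMap R F r ≠ 0 :=
      fun h0 => hr (IsFractionRing.injective R F (by rw [h0, map_zero]))
    have : algebraMap R F r • u = 0 := by rwa [algebraMap_smul]
    rcases smul_eq_zero.mp this with h0 | h0
    · exact absurd h0 hF
    · exact h0
  -- common denominators
  have hdenom : ∀ x : A, ∃ r : R, r ≠ 0 ∧ ∃ c : 𝔄, r • x = algebraMap 𝔄 A c := by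
    intro x
    have hx : x ∈ Submodule.span F (Set.range (algebraMap 𝔄 A)) := by
      rw [hspan]; trivial
    induction hx using Submodule.span_induction with
    | mem y hy =>
      obtain ⟨c, rfl⟩ := hy
      exact ⟨1, one_ne_zero, c, one_smul _ _⟩
    | zero => exact ⟨1, one_ne_zero, 0, by simp⟩
    | add y z hy hz ihy ihz =>
      obtain ⟨r, hr, c, hc⟩ := ihy
      obtain ⟨s, hs, d, hd⟩ := ihz
      refine ⟨r * s, mul_ne_zero hr hs, s • c + r • d, ?_⟩
      rw [map_add, hRsmul, hRsmul, ← hc, ← hd, smul_smul, smul_smul, mul_comm s r, smul_add]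
    | smul f y hy ih =>
      obtain ⟨r, hr, c, hc⟩ := ih
      obtain ⟨⟨s, t⟩, hst⟩ := IsLocalization.surj (nonZeroDivisors R) f
      dsimp only at hst
      have ht : (t : R) ≠ 0 := nonZeroDivisors.ne_zero t.2
      refine ⟨t * r, mul_ne_zero ht hr, s • c, ?_⟩
      rw [hRsmul, ← hc, smul_smul]
      have h1 : ((t : R) * r) • (f • y) = (algebraMap R F ((t : R) * r) * f) • y := by
        rw [← algebraMap_smul F ((t : R) * r) (f • y), smul_smul]
      rw [h1]
      have h2 : algebraMap R F ((t : R) * r) * f = algebraMap R F (s * r) := by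
        rw [map_mul, map_mul]
        calc algebraMap R F (t : R) * algebraMap R F r * f
            = (f * algebraMap R F (t : R)) * algebraMap R F r := by ring
          _ = algebraMap R F s * algebraMap R F r := by rw [hst]
      rw [h2, algebraMap_smul]
  -- part 1
  have part1 : ∀ a : 𝔄, a • η = 0 ↔ algebraMap 𝔄 A a * e = 0 := by
    intro a
    constructor
    · intro h
      by_contra hz0
      obtain ⟨e', y, h1, h2, h3, h4, h5⟩ :=
        key_idem F A e (algebraMap 𝔄 A a * e) he (by rw [mul_assoc, he]) hz0
      apply hηnz e' h1 h2 h3 h4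
      calc e' • η = (y * ((algebraMap 𝔄 A a) * e)) • η := by rw [h5]
        _ = y • ((algebraMap 𝔄 A a) • (e • η)) := by rw [mul_smul, mul_smul]
        _ = y • ((algebraMap 𝔄 A a) • η) := by rw [hηfix]
        _ = y • (a • η) := by rw [algebraMap_smul]
        _ = 0 := by rw [h, smul_zero]
    · intro h
      have h1 : a • η = (algebraMap 𝔄 A a) • η := (algebraMap_smul A a η).symm
      rw [h1, ← hηfix, smul_smul, h, zero_smul]
  refine ⟨part1, ?_, ?_⟩
  · intro θ₁ θ₂ hθ
    simp only at hθ
    apply LinearMap.ext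
    rintro ⟨v, hv⟩
    obtain ⟨b, hb⟩ := Submodule.mem_span_singleton.mp hv
    have hvb : (⟨v, hv⟩ : Submodule.span 𝔄 ({η} : Set V)) =
        b • ⟨η, Submodule.mem_span_singleton_self η⟩ := Subtype.ext (by simp [← hb])
    rw [hvb, map_smul, map_smul, hθ]
  · ext a
    constructor
    · rintro ⟨θ, rfl⟩
      simp only [Set.mem_setOf_eq]
      set a := θ ⟨η, Submodule.mem_span_singleton_self η⟩ with ha
      have hbθ : ∀ b : 𝔄, algebraMap 𝔄 A b * e = 0 → b * a = 0 := by
        intro b hb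
        have hbη : b • η = 0 := (part1 b).mpr hb
        have hb0 : b • (⟨η, Submodule.mem_span_singleton_self η⟩ :
            Submodule.span 𝔄 ({η} : Set V)) = 0 := Subtype.ext (by simpa using hbη)
        calc b * a = b • a := (smul_eq_mul b a).symm
          _ = θ (b • ⟨η, Submodule.mem_span_singleton_self η⟩) := (map_smul θ b _).symm
          _ = 0 := by rw [hb0, map_zero]
      obtain ⟨r, hr, c₀, hc₀⟩ := hdenom e
      have hall : ∀ b : 𝔄, algebraMap 𝔄 A b * ((1 - e) * algebraMap 𝔄 A a) = 0 := by
        intro b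
        have hd_eq : algebraMap 𝔄 A (r • b - b * c₀) = r • (algebraMap 𝔄 A b * (1 - e)) := by
          rw [map_sub, hRsmul, map_mul, ← hc₀, mul_smul_comm, mul_sub, mul_one, smul_sub]
        have hd : algebraMap 𝔄 A (r • b - b * c₀) * e = 0 := by
          rw [hd_eq, smul_mul_assoc, mul_assoc, sub_mul, one_mul, he, sub_self, mul_zero,
            smul_zero]
        have h0 : (r • b - b * c₀) * a = 0 := hbθ _ hd
        have h0' : algebraMap 𝔄 A (r • b - b * c₀) * algebraMap 𝔄 A a = 0 := by
          rw [← map_mul, h0, map_zero]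
        have h1 : r • (algebraMap 𝔄 A b * ((1 - e) * algebraMap 𝔄 A a)) = 0 := by
          calc r • (algebraMap 𝔄 A b * ((1 - e) * algebraMap 𝔄 A a))
              = (r • (algebraMap 𝔄 A b * (1 - e))) * algebraMap 𝔄 A a := by
                rw [smul_mul_assoc, mul_assoc]
            _ = 0 := by rw [← hd_eq, h0']
        exact hr_cancel r hr _ h1
      have hA : ∀ x : A, x * ((1 - e) * algebraMap 𝔄 A a) = 0 := by
        intro x
        have hx : x ∈ Submodule.span F (Set.range (algebraMap 𝔄 A)) := by rw [hspan]; trivial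
        induction hx using Submodule.span_induction with
        | mem y hy =>
          obtain ⟨b, rfl⟩ := hy
          exact hall b
        | zero => rw [zero_mul]
        | add y z hy hz ihy ihz => rw [add_mul, ihy, ihz, add_zero]
        | smul f y hy ih => rw [smul_mul_assoc, ih, smul_zero]
      have h1 := hA 1
      rw [one_mul, sub_mul, one_mul] at h1
      exact (sub_eq_zero.mp h1).symm
    · intro ha
      simp only [Set.mem_setOf_eq] at ha
      set ψ := LinearMap.toSpanSingleton 𝔄 V η with hψ
      set μ := LinearMap.toSpanSingleton 𝔄 𝔄 a with hμ
      have hker : LinearMap.ker ψ ≤ LinearMap.ker μ := by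
        intro b hb
        rw [LinearMap.mem_ker] at hb ⊢
        have hb' : b • η = 0 := hb
        have hbe := (part1 b).mp hb'
        show b • a = 0
        rw [smul_eq_mul]
        apply hinj
        rw [map_mul, map_zero, ← ha, ← mul_assoc, hbe, zero_mul]
      refine ⟨(Submodule.liftQ (LinearMap.ker ψ) μ hker) ∘ₗ
        ((LinearMap.quotKerEquivRange ψ).symm.toLinearMap) ∘ₗ
        (LinearEquiv.ofEq _ _ (LinearMap.span_singleton_eq_range 𝔄 V η)).toLinearMap, ?_⟩
      show (Submodule.liftQ (LinearMap.ker ψ) μ hker)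
        ((LinearMap.quotKerEquivRange ψ).symm
          ((LinearEquiv.ofEq _ _ (LinearMap.span_singleton_eq_range 𝔄 V η))
            ⟨η, Submodule.mem_span_singleton_self η⟩)) = a
      have hmem : η ∈ LinearMap.range ψ := by
        rw [← LinearMap.span_singleton_eq_range]
        exact Submodule.mem_span_singleton_self η
      have hη' : (LinearEquiv.ofEq _ _ (LinearMap.span_singleton_eq_range 𝔄 V η))
          ⟨η, Submodule.mem_span_singleton_self η⟩ = ⟨η, hmem⟩ := rfl
      rw [hη']
      have hψ1 : ψ 1 = η := LinearMap.toSpanSingleton_apply_one 𝔄 V η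
      have hq : (LinearMap.quotKerEquivRange ψ).symm ⟨η, hmem⟩ =
          Submodule.Quotient.mk (1 : 𝔄) := by
        rw [LinearEquiv.symm_apply_eq]
        exact Subtype.ext (by rw [LinearMap.quotKerEquivRange_apply_mk, hψ1])
      rw [hq, Submodule.liftQ_apply]
      exact LinearMap.toSpanSingleton_apply_one 𝔄 𝔄 a
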